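/- Let T > 0 and Θ > 0, let θ : [0,T] → [0,Θ] be measurable, let α : [0,T] → [0,∞) be nondecreasing, and let u : [0,T] → [0,∞) be continuous and satisfy u(t) ≤ α(t) + ∫₀^t u(s) θ(s) exp( −∫_s^t θ(u') du' ) ds for all t ∈ [0,T]. Then u(t) ≤ α(t) (1 + Θ t) for all t ∈ [0,T]. -/

import Mathlib

open MeasureTheory

set_option maxHeartbeats 2000000 in
/-- Gronwall-type estimate (A.9)–(A.10) of the paper: if
`u(t) ≤ α(t) + ∫₀^t u(s) θ(s) exp(−∫_s^t θ) ds` on `[0,T]` with `θ : [0,T] → [0,Θ]`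
measurable, `α` nondecreasing and nonnegative, and `u` continuous and nonnegative, then
`u(t) ≤ α(t)(1 + Θ t)` on `[0,T]`. -/
theorem gronwall_weighted_kernel
    (T Θ : ℝ) (hT : 0 < T) (hΘ : 0 < Θ)
    (θ α u : ℝ → ℝ)
    (hθmeas : Measurable θ)
    (hθmem : ∀ s ∈ Set.Icc (0 : ℝ) T, θ s ∈ Set.Icc (0 : ℝ) Θ)
    (hαmono : MonotoneOn α (Set.Icc 0 T))
    (hαnonneg : ∀ s ∈ Set.Icc (0 : ℝ) T, 0 ≤ α s)
    (hu_cont : ContinuousOn u (Set.Icc 0 T))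
    (hu_nonneg : ∀ s ∈ Set.Icc (0 : ℝ) T, 0 ≤ u s)
    (hu_le : ∀ t ∈ Set.Icc (0 : ℝ) T,
      u t ≤ α t + ∫ s in (0 : ℝ)..t, u s * θ s * Real.exp (-∫ w in s..t, θ w)) :
    ∀ t ∈ Set.Icc (0 : ℝ) T, u t ≤ α t * (1 + Θ * t) := by
  set F : ℝ → ℝ := fun t => ∫ s in (0:ℝ)..t, θ s with hFdef
  set g : ℝ → ℝ := fun s => u s * θ s * Real.exp (F s) with hgdef
  set W : ℝ → ℝ := fun t => ∫ s in (0:ℝ)..t, g s with hWdef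
  set φ : ℝ → ℝ := fun t => Real.exp (-F t) * W t with hφdef
  have h0T : (0:ℝ) ∈ Set.Icc (0:ℝ) T := ⟨le_rfl, hT.le⟩
  have hsub : ∀ {a b : ℝ}, a ∈ Set.Icc (0:ℝ) T → b ∈ Set.Icc (0:ℝ) T →
      Set.uIoc a b ⊆ Set.Icc (0:ℝ) T := fun ha hb =>
    Set.uIoc_subset_uIcc.trans (Set.uIcc_subset_Icc ha hb)
  -- generic integrability
  have hint : ∀ {f : ℝ → ℝ} (_ : AEStronglyMeasurable f (volume.restrict (Set.Icc (0:ℝ) T)))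
      (M : ℝ) (_ : ∀ s ∈ Set.Icc (0:ℝ) T, |f s| ≤ M) {a b : ℝ},
      a ∈ Set.Icc (0:ℝ) T → b ∈ Set.Icc (0:ℝ) T → IntervalIntegrable f volume a b := by
    intro f hf M hM a b ha hb
    rw [intervalIntegrable_iff]
    have hsub' := hsub ha hb
    have hfin : volume (Set.uIoc a b) < ⊤ :=
      (measure_mono hsub').trans_lt (by rw [Real.volume_Icc]; exact ENNReal.ofReal_lt_top)
    refine Integrable.mono' (g := fun _ => M) (integrableOn_const hfin.ne (by simp))
      (hf.mono_measure (Measure.restrict_mono hsub' le_rfl)) ?_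
    refine (ae_restrict_iff' measurableSet_uIoc).2 (Filter.Eventually.of_forall ?_)
    intro s hs
    simpa using hM s (hsub' hs)
  have hθbd : ∀ s ∈ Set.Icc (0:ℝ) T, |θ s| ≤ Θ := fun s hs =>
    abs_le.2 ⟨by linarith [(hθmem s hs).1], (hθmem s hs).2⟩
  have hθint : ∀ {a b : ℝ}, a ∈ Set.Icc (0:ℝ) T → b ∈ Set.Icc (0:ℝ) T →
      IntervalIntegrable θ volume a b :=
    fun ha hb => hint (hθmeas.aestronglyMeasurable) Θ hθbd ha hb
  -- F basic facts
  have hFd : ∀ {a b : ℝ}, a ∈ Set.Icc (0:ℝ) T → b ∈ Set.Icc (0:ℝ) T →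
      F b = F a + ∫ s in a..b, θ s := by
    intro a b ha hb
    have := intervalIntegral.integral_add_adjacent_intervals (hθint h0T ha) (hθint ha hb)
    simp only [hFdef]
    linarith [this]
  have hθab : ∀ {a b : ℝ}, a ∈ Set.Icc (0:ℝ) T → b ∈ Set.Icc (0:ℝ) T → a ≤ b →
      (0 ≤ ∫ s in a..b, θ s) ∧ (∫ s in a..b, θ s) ≤ Θ * (b - a) := by
    intro a b ha hb hab
    constructor
    · apply intervalIntegral.integral_nonneg hab
      intro s hs
      exact (hθmem s ⟨ha.1.trans hs.1, hs.2.trans hb.2⟩).1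
    · have := intervalIntegral.integral_mono_on hab (hθint ha hb)
        (intervalIntegrable_const (c := Θ))
        (fun s hs => (hθmem s ⟨ha.1.trans hs.1, hs.2.trans hb.2⟩).2)
      simp only [intervalIntegral.integral_const, smul_eq_mul] at this
      linarith
  have hFmono : ∀ {a b : ℝ}, a ∈ Set.Icc (0:ℝ) T → b ∈ Set.Icc (0:ℝ) T → a ≤ b →
      F a ≤ F b := by
    intro a b ha hb hab
    have := (hθab ha hb hab).1
    rw [hFd ha hb]; linarith
  have hFlip : ∀ {a b : ℝ}, a ∈ Set.Icc (0:ℝ) T → b ∈ Set.Icc (0:ℝ) T → a ≤ b →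
      F b - F a ≤ Θ * (b - a) := by
    intro a b ha hb hab
    have := (hθab ha hb hab).2
    rw [hFd ha hb]; linarith
  have hF0 : F 0 = 0 := by simp [hFdef]
  have hFbd : ∀ s ∈ Set.Icc (0:ℝ) T, 0 ≤ F s ∧ F s ≤ Θ * T := by
    intro s hs
    constructor
    · have := hFmono h0T hs hs.1; rwa [hF0] at this
    · have h1 := hFlip h0T hs hs.1
      have h2 : Θ * (s - 0) ≤ Θ * T := by
        have := hs.2; nlinarith
      rw [hF0] at h1; linarith
  have hFcont : ContinuousOn F (Set.Icc 0 T) := by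
    refine LipschitzOnWith.continuousOn (K := Real.toNNReal Θ) ?_
    refine LipschitzOnWith.of_dist_le_mul ?_
    intro x hx y hy
    rw [Real.dist_eq, Real.dist_eq, Real.coe_toNNReal _ hΘ.le]
    rcases le_total y x with h | h
    · have h1 := hFlip hy hx h
      have h2 := hFmono hy hx h
      rw [abs_of_nonneg (by linarith), abs_of_nonneg (by linarith)]
      linarith
    · have h1 := hFlip hx hy h
      have h2 := hFmono hx hy h
      rw [abs_of_nonpos (by linarith), abs_of_nonpos (by linarith)]
      linarith
  -- boundedness / measurability of g
  obtain ⟨Mu, hMu⟩ := (isCompact_Icc (a := (0:ℝ)) (b := T)).exists_bound_of_continuousOn hu_cont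
  have hMu0 : 0 ≤ Mu := (norm_nonneg _).trans (hMu 0 h0T)
  have hg_meas : AEStronglyMeasurable g (volume.restrict (Set.Icc (0:ℝ) T)) := by
    have h1 : AEStronglyMeasurable u (volume.restrict (Set.Icc (0:ℝ) T)) :=
      hu_cont.aestronglyMeasurable measurableSet_Icc
    have h2 : AEStronglyMeasurable (fun s => Real.exp (F s)) (volume.restrict (Set.Icc (0:ℝ) T)) :=
      (Real.continuous_exp.comp_continuousOn hFcont).aestronglyMeasurable measurableSet_Icc
    exact (h1.mul hθmeas.aestronglyMeasurable).mul h2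
  have hg_bd : ∀ s ∈ Set.Icc (0:ℝ) T, |g s| ≤ Mu * Θ * Real.exp (Θ * T) := by
    intro s hs
    have h1 : |u s| ≤ Mu := by simpa [Real.norm_eq_abs] using hMu s hs
    have h2 := hθbd s hs
    have h3 : |Real.exp (F s)| ≤ Real.exp (Θ * T) := by
      rw [abs_of_pos (Real.exp_pos _)]
      exact Real.exp_le_exp.2 (hFbd s hs).2
    calc |g s| = |u s| * |θ s| * |Real.exp (F s)| := by simp [hgdef, abs_mul]
    _ ≤ Mu * Θ * Real.exp (Θ * T) := by
        exact mul_le_mul (mul_le_mul h1 h2 (abs_nonneg _) ((abs_nonneg _).trans h1))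
          h3 (abs_nonneg _) (mul_nonneg hMu0 hΘ.le)
  have hgint : ∀ {a b : ℝ}, a ∈ Set.Icc (0:ℝ) T → b ∈ Set.Icc (0:ℝ) T →
      IntervalIntegrable g volume a b := fun ha hb => hint hg_meas _ hg_bd ha hb
  have hθe_meas : AEStronglyMeasurable (fun s => θ s * Real.exp (F s))
      (volume.restrict (Set.Icc (0:ℝ) T)) :=
    hθmeas.aestronglyMeasurable.mul
      ((Real.continuous_exp.comp_continuousOn hFcont).aestronglyMeasurable measurableSet_Icc)
  have hθe_bd : ∀ s ∈ Set.Icc (0:ℝ) T, |θ s * Real.exp (F s)| ≤ Θ * Real.exp (Θ * T) := by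
    intro s hs
    rw [abs_mul, abs_of_pos (Real.exp_pos _)]
    exact mul_le_mul (hθbd s hs) (Real.exp_le_exp.2 (hFbd s hs).2) (Real.exp_pos _).le hΘ.le
  have hθeint : ∀ {a b : ℝ}, a ∈ Set.Icc (0:ℝ) T → b ∈ Set.Icc (0:ℝ) T →
      IntervalIntegrable (fun s => θ s * Real.exp (F s)) volume a b :=
    fun ha hb => hint hθe_meas _ hθe_bd ha hb
  -- the key integral inequality
  have hIn : ∀ n : ℕ, ∀ a b : ℝ, a ∈ Set.Icc (0:ℝ) T → b ∈ Set.Icc (0:ℝ) T → a ≤ b →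
      (∫ s in a..b, θ s * Real.exp (F s)) ≤
        Real.exp (Θ * (b - a) / 2 ^ n) * (Real.exp (F b) - Real.exp (F a)) := by
    intro n
    induction n with
    | zero =>
      intro a b ha hb hab
      have hstep : (∫ s in a..b, θ s * Real.exp (F s)) ≤ (∫ s in a..b, θ s) * Real.exp (F b) := by
        have := intervalIntegral.integral_mono_on hab (hθeint ha hb)
          ((hθint ha hb).mul_const (Real.exp (F b)))
          (fun s hs => by
            have hsT : s ∈ Set.Icc (0:ℝ) T := ⟨ha.1.trans hs.1, hs.2.trans hb.2⟩
            exact mul_le_mul_of_nonneg_left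
              (Real.exp_le_exp.2 (hFmono hsT hb hs.2)) (hθmem s hsT).1)
        rwa [intervalIntegral.integral_mul_const] at this
      set x := F b - F a with hx
      have hx0 : 0 ≤ x := by have := hFmono ha hb hab; simp [hx]; linarith
      have hxc : x ≤ Θ * (b - a) := hFlip ha hb hab
      have hEa : Real.exp (F a) = Real.exp (F b) * Real.exp (-x) := by
        rw [← Real.exp_add, hx]; ring_nf
      have key : x ≤ Real.exp (Θ * (b - a)) * (1 - Real.exp (-x)) := by
        have h1 : x * Real.exp (-x) ≤ 1 - Real.exp (-x) := by
          have := Real.add_one_le_exp x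
          nlinarith [Real.exp_pos (-x), Real.exp_neg x, mul_pos (Real.exp_pos x) (Real.exp_pos (-x)),
            Real.exp_neg x ▸ (mul_inv_cancel₀ (Real.exp_pos x).ne' : Real.exp x * (Real.exp x)⁻¹ = 1)]
        have h2 : x * Real.exp (-x) * Real.exp (Θ * (b - a)) ≥ x := by
          have : Real.exp (-x) * Real.exp (Θ * (b - a)) = Real.exp (Θ * (b - a) - x) := by
            rw [← Real.exp_add]; ring_nf
          nlinarith [Real.one_le_exp (by linarith : (0:ℝ) ≤ Θ * (b - a) - x), this]
        nlinarith [Real.exp_pos (Θ * (b - a))]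
      have hθle : (∫ s in a..b, θ s) ≤ x := by
        rw [hFd ha hb] at hx; simp [hx]
      have hθge : 0 ≤ (∫ s in a..b, θ s) := (hθab ha hb hab).1
      calc (∫ s in a..b, θ s * Real.exp (F s)) ≤ (∫ s in a..b, θ s) * Real.exp (F b) := hstep
      _ ≤ x * Real.exp (F b) := mul_le_mul_of_nonneg_right hθle (Real.exp_pos _).le
      _ ≤ Real.exp (Θ * (b - a)) * (1 - Real.exp (-x)) * Real.exp (F b) :=
          mul_le_mul_of_nonneg_right key (Real.exp_pos _).le
      _ = Real.exp (Θ * (b - a) / 2 ^ 0) * (Real.exp (F b) - Real.exp (F a)) := by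
          rw [hEa]; ring_nf
    | succ n ih =>
      intro a b ha hb hab
      set m := (a + b) / 2 with hm
      have ham : a ≤ m := by simp [hm]; linarith
      have hmb : m ≤ b := by simp [hm]; linarith
      have hmT : m ∈ Set.Icc (0:ℝ) T := ⟨ha.1.trans ham, hmb.trans hb.2⟩
      have hsplit := intervalIntegral.integral_add_adjacent_intervals
        (hθeint ha hmT) (hθeint hmT hb)
      have h1 := ih a m ha hmT ham
      have h2 := ih m b hmT hb hmb
      have hma : m - a = (b - a) / 2 := by simp [hm]; ring
      have hbm : b - m = (b - a) / 2 := by simp [hm]; ring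
      have hexp : Θ * ((b - a) / 2) / 2 ^ n = Θ * (b - a) / 2 ^ (n + 1) := by
        rw [pow_succ]; ring
      rw [hma, hexp] at h1
      rw [hbm, hexp] at h2
      calc (∫ s in a..b, θ s * Real.exp (F s))
          = (∫ s in a..m, θ s * Real.exp (F s)) + (∫ s in m..b, θ s * Real.exp (F s)) :=
            hsplit.symm
      _ ≤ Real.exp (Θ * (b - a) / 2 ^ (n+1)) * (Real.exp (F m) - Real.exp (F a)) +
          Real.exp (Θ * (b - a) / 2 ^ (n+1)) * (Real.exp (F b) - Real.exp (F m)) := by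
            linarith
      _ = Real.exp (Θ * (b - a) / 2 ^ (n+1)) * (Real.exp (F b) - Real.exp (F a)) := by ring
  have hI : ∀ {a b : ℝ}, a ∈ Set.Icc (0:ℝ) T → b ∈ Set.Icc (0:ℝ) T → a ≤ b →
      (∫ s in a..b, θ s * Real.exp (F s)) ≤ Real.exp (F b) - Real.exp (F a) := by
    intro a b ha hb hab
    have hlim : Filter.Tendsto (fun n : ℕ =>
        Real.exp (Θ * (b - a) / 2 ^ n) * (Real.exp (F b) - Real.exp (F a)))
        Filter.atTop (nhds (Real.exp (F b) - Real.exp (F a))) := by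
      have h1 : Filter.Tendsto (fun n : ℕ => Θ * (b - a) / 2 ^ n) Filter.atTop (nhds 0) := by
        have : (fun n : ℕ => Θ * (b - a) / 2 ^ n) = fun n : ℕ => Θ * (b - a) * (1/2 : ℝ) ^ n := by
          funext n; rw [div_pow, one_pow]; ring
        rw [this]
        have := tendsto_pow_atTop_nhds_zero_of_lt_one (by norm_num : (0:ℝ) ≤ 1/2)
          (by norm_num : (1/2:ℝ) < 1)
        simpa using this.const_mul (Θ * (b - a))
      have h2 := (Real.continuous_exp.tendsto 0).comp h1
      rw [Real.exp_zero] at h2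
      simpa using h2.mul_const (Real.exp (F b) - Real.exp (F a))
    exact ge_of_tendsto' hlim (fun n => hIn n a b ha hb hab)
  -- hypothesis in terms of φ
  have huφ : ∀ t ∈ Set.Icc (0:ℝ) T, u t ≤ α t + φ t := by
    intro t ht
    have hcongr : ∀ s ∈ Set.uIcc (0:ℝ) t,
        u s * θ s * Real.exp (-∫ w in s..t, θ w) = Real.exp (-F t) * g s := by
      intro s hs
      rw [Set.uIcc_of_le ht.1] at hs
      have hsT : s ∈ Set.Icc (0:ℝ) T := ⟨hs.1, hs.2.trans ht.2⟩
      have : (∫ w in s..t, θ w) = F t - F s := by rw [hFd hsT ht]; ring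
      rw [this, hgdef]
      simp only []
      rw [show -(F t - F s) = F s + (-F t) by ring, Real.exp_add]
      ring
    have := hu_le t ht
    rwa [intervalIntegral.integral_congr hcongr, intervalIntegral.integral_const_mul] at this
  -- key one-step estimate
  have hE : ∀ (a b C : ℝ), a ∈ Set.Icc (0:ℝ) T → b ∈ Set.Icc (0:ℝ) T → a ≤ b → 0 ≤ C →
      (∀ s ∈ Set.Icc a b, u s ≤ C + φ a) → φ b ≤ φ a + C * (Θ * (b - a)) := by
    intro a b C ha hb hab hC hub
    have hWb : W b = W a + ∫ s in a..b, g s := by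
      have := intervalIntegral.integral_add_adjacent_intervals (hgint h0T ha) (hgint ha hb)
      simp only [hWdef]; linarith
    have hCφ : 0 ≤ C + φ a := (hu_nonneg a ha).trans (hub a ⟨le_rfl, hab⟩)
    have hgle : (∫ s in a..b, g s) ≤ (C + φ a) * (Real.exp (F b) - Real.exp (F a)) := by
      have step1 : (∫ s in a..b, g s) ≤ ∫ s in a..b, (C + φ a) * (θ s * Real.exp (F s)) := by
        apply intervalIntegral.integral_mono_on hab (hgint ha hb)
          ((hθeint ha hb).const_mul _)
        intro s hs
        have hsT : s ∈ Set.Icc (0:ℝ) T := ⟨ha.1.trans hs.1, hs.2.trans hb.2⟩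
        have h1 : u s ≤ C + φ a := hub s hs
        have h2 : 0 ≤ θ s * Real.exp (F s) :=
          mul_nonneg (hθmem s hsT).1 (Real.exp_pos _).le
        calc g s = u s * (θ s * Real.exp (F s)) := by rw [hgdef]; ring
        _ ≤ (C + φ a) * (θ s * Real.exp (F s)) := mul_le_mul_of_nonneg_right h1 h2
      rw [intervalIntegral.integral_const_mul] at step1
      exact step1.trans (mul_le_mul_of_nonneg_left (hI ha hb hab) hCφ)
    set e1 := Real.exp (F a) with he1
    set e2 := Real.exp (F b) with he2
    have he1p : 0 < e1 := Real.exp_pos _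
    have he2p : 0 < e2 := Real.exp_pos _
    have he12 : e1 ≤ e2 := Real.exp_le_exp.2 (hFmono ha hb hab)
    have hφa : φ a = Real.exp (-F a) * W a := rfl
    have hφbdef : φ b = Real.exp (-F b) * W b := rfl
    have hWa : W a = e1 * φ a := by
      rw [hφa, Real.exp_neg, ← he1]
      field_simp
    have hφb : φ b ≤ e2⁻¹ * (e1 * φ a + (C + φ a) * (e2 - e1)) := by
      rw [hφbdef, Real.exp_neg, ← he2, hWb]
      exact mul_le_mul_of_nonneg_left (by linarith [hgle, hWa]) (inv_pos.2 he2p).le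
    have hratio : 1 - e1 / e2 ≤ Θ * (b - a) := by
      have h1 : F a - F b + 1 ≤ e1 / e2 := by
        have := Real.add_one_le_exp (F a - F b)
        rwa [Real.exp_sub] at this
      have h2 := hFlip ha hb hab
      linarith
    have hsimp : e2⁻¹ * (e1 * φ a + (C + φ a) * (e2 - e1)) = φ a + C * (1 - e1 / e2) := by
      field_simp
      ring
    rw [hsimp] at hφb
    have : C * (1 - e1 / e2) ≤ C * (Θ * (b - a)) := mul_le_mul_of_nonneg_left hratio hC
    linarith
  have hφ0 : φ 0 = 0 := by simp [hφdef, hWdef]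
  -- continuity of φ on [0,T]
  have hφcont : ContinuousOn φ (Set.Icc 0 T) := by
    have hWcont : ContinuousOn W (Set.Icc 0 T) := by
      refine LipschitzOnWith.continuousOn (K := Real.toNNReal (Mu * Θ * Real.exp (Θ * T))) ?_
      refine LipschitzOnWith.of_dist_le_mul ?_
      intro x hx y hy
      have hMnn : 0 ≤ Mu * Θ * Real.exp (Θ * T) := by
        have : (0:ℝ) ≤ Mu := (norm_nonneg _).trans (hMu 0 h0T)
        positivity
      rw [Real.dist_eq, Real.dist_eq, Real.coe_toNNReal _ hMnn]
      have key : ∀ p q : ℝ, p ∈ Set.Icc (0:ℝ) T → q ∈ Set.Icc (0:ℝ) T → p ≤ q →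
          |W q - W p| ≤ Mu * Θ * Real.exp (Θ * T) * (q - p) := by
        intro p q hp hq hpq
        have hWq : W q - W p = ∫ s in p..q, g s := by
          have := intervalIntegral.integral_add_adjacent_intervals (hgint h0T hp) (hgint hp hq)
          simp only [hWdef]; linarith
        rw [hWq]
        have hnorm : ‖∫ s in p..q, g s‖ ≤ Mu * Θ * Real.exp (Θ * T) * |q - p| :=
          intervalIntegral.norm_integral_le_of_norm_le_const
            (fun x hx => by simpa [Real.norm_eq_abs] using hg_bd x (hsub hp hq hx))
        rwa [Real.norm_eq_abs, show |q - p| = q - p from abs_of_nonneg (by linarith)] at hnorm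
      rcases le_total x y with h | h
      · have := key x y hx hy h
        rw [abs_sub_comm] at this
        calc |W x - W y| ≤ Mu * Θ * Real.exp (Θ * T) * (y - x) := by rw [abs_sub_comm]; exact key x y hx hy h
        _ ≤ Mu * Θ * Real.exp (Θ * T) * |x - y| := by
            rw [abs_of_nonpos (by linarith)]; nlinarith
      · calc |W x - W y| ≤ Mu * Θ * Real.exp (Θ * T) * (x - y) := key y x hy hx h
        _ = Mu * Θ * Real.exp (Θ * T) * |x - y| := by rw [abs_of_nonneg (by linarith)]
    exact ((Real.continuous_exp.comp_continuousOn hFcont.neg)).mul hWcont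
  -- main bound on φ
  have hφbound : ∀ t₀ ∈ Set.Icc (0:ℝ) T, φ t₀ ≤ Θ * α t₀ * t₀ := by
    intro t₀ ht₀
    rcases eq_or_lt_of_le ht₀.1 with h0 | h0
    · rw [← h0, hφ0]; simp
    have hkey : ∀ ε > (0:ℝ), φ t₀ ≤ Θ * (α t₀ + ε) * t₀ := by
      intro ε hε
      have hUC := (isCompact_Icc (a := (0:ℝ)) (b := T)).uniformContinuousOn_of_continuous hφcont
      rw [Metric.uniformContinuousOn_iff] at hUC
      obtain ⟨δ, hδ0, hδ⟩ := hUC ε hε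
      obtain ⟨n, hn⟩ := exists_nat_gt (t₀ / δ)
      have hn0 : 0 < (n:ℝ) := lt_of_le_of_lt (div_nonneg h0.le hδ0.le) hn
      set h := t₀ / n with hh
      have hh0 : 0 < h := div_pos h0 hn0
      have hhδ : h < δ := by
        rw [hh, div_lt_iff₀ hn0]
        have := (div_lt_iff₀ hδ0).1 hn
        nlinarith
      have hnh : (n:ℝ) * h = t₀ := by rw [hh]; field_simp [hn0.ne']
      set C := α t₀ + ε with hCdef
      have hC0 : 0 ≤ C := add_nonneg (hαnonneg t₀ ht₀) hε.le
      have main : ∀ i : ℕ, i ≤ n → φ ((i:ℝ) * h) ≤ Θ * C * ((i:ℝ) * h) := by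
        intro i
        induction i with
        | zero => intro _; simp [hφ0]
        | succ i ih =>
          intro hin
          have hi1 : ((i:ℝ) + 1) ≤ (n:ℝ) := by exact_mod_cast hin
          have hi0 : (0:ℝ) ≤ (i:ℝ) := Nat.cast_nonneg i
          set a := (i:ℝ) * h with hadef
          set b := ((i:ℝ) + 1) * h with hbdef
          have hab : a ≤ b := by nlinarith
          have hbt₀ : b ≤ t₀ := by rw [← hnh]; nlinarith
          have ha0 : 0 ≤ a := by positivity
          have haT : a ∈ Set.Icc (0:ℝ) T := ⟨ha0, (hab.trans hbt₀).trans ht₀.2⟩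
          have hbT : b ∈ Set.Icc (0:ℝ) T := ⟨ha0.trans hab, hbt₀.trans ht₀.2⟩
          have hbound : ∀ s ∈ Set.Icc a b, u s ≤ C + φ a := by
            intro s hs
            have hsT : s ∈ Set.Icc (0:ℝ) T := ⟨ha0.trans hs.1, hs.2.trans hbT.2⟩
            have h1 := huφ s hsT
            have h2 : α s ≤ α t₀ := hαmono hsT ht₀ (hs.2.trans hbt₀)
            have h3 : dist (φ s) (φ a) < ε := by
              apply hδ s hsT a haT
              rw [Real.dist_eq, abs_of_nonneg (by linarith [hs.1])]
              have : s - a ≤ h := by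
                have := hs.2
                rw [hbdef] at this
                nlinarith
              linarith
            rw [Real.dist_eq] at h3
            have h4 : φ s ≤ φ a + ε := by
              rcases abs_lt.1 h3 with ⟨_, h5⟩
              linarith
            rw [hCdef]
            linarith
          have hstep := hE a b C haT hbT hab hC0 hbound
          have hba : b - a = h := by rw [hadef, hbdef]; ring
          have hφa := ih (Nat.le_of_succ_le hin)
          have hcast : ((i+1 : ℕ):ℝ) = (i:ℝ) + 1 := by push_cast; ring
          rw [hba] at hstep
          have hring : Θ * C * (((i:ℝ) + 1) * h) = Θ * C * ((i:ℝ) * h) + C * (Θ * h) := by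
            ring
          rw [hcast, ← hbdef]
          rw [← hbdef, ← hadef] at hring
          linarith
      have := main n le_rfl
      rw [hnh] at this
      exact this
    by_contra hcon
    push_neg at hcon
    have hΘt : 0 < Θ * t₀ := mul_pos hΘ h0
    set ε := (φ t₀ - Θ * α t₀ * t₀) / (2 * (Θ * t₀)) with hεdef
    have hε0 : 0 < ε := by
      apply div_pos (by linarith) (by linarith)
    have := hkey ε hε0
    have hexp : Θ * (α t₀ + ε) * t₀ = Θ * α t₀ * t₀ + (Θ * t₀) * ε := by ring
    rw [hexp] at this
    have : (Θ * t₀) * ε = (φ t₀ - Θ * α t₀ * t₀) / 2 := by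
      rw [hεdef]; field_simp
    linarith
  -- conclude
  intro t ht
  have h1 := huφ t ht
  have h2 := hφbound t ht
  have h3 := hαnonneg t ht
  nlinarith
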